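/- For all k ≥ 0 and all i ≥ 1, the number of permutations σ of {1,…,2^k − 1} that avoid the pattern 321 and satisfy inv σ = i is even; and exactly one such permutation has inv σ = 0. -/

import Mathlib

open scoped Classical

/-- `σ` contains the pattern `π`. -/
def permContains {n k : ℕ} (σ : Equiv.Perm (Fin n)) (π : Equiv.Perm (Fin k)) : Prop :=
  ∃ f : Fin k → Fin n, StrictMono f ∧ ∀ i j : Fin k, π i < π j ↔ σ (f i) < σ (f j)

/-- `σ` avoids the pattern `π`. -/
def permAvoids {n k : ℕ} (σ : Equiv.Perm (Fin n)) (π : Equiv.Perm (Fin k)) : Prop :=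
  ¬ permContains σ π

def p123 : Equiv.Perm (Fin 3) := 1
def p132 : Equiv.Perm (Fin 3) := Equiv.swap 1 2
def p213 : Equiv.Perm (Fin 3) := Equiv.swap 0 1
def p231 : Equiv.Perm (Fin 3) := finRotate 3
def p312 : Equiv.Perm (Fin 3) := (finRotate 3)⁻¹
def p321 : Equiv.Perm (Fin 3) := Equiv.swap 0 2

/-- Descent set of a permutation, as a set of (1-based) positions `i` with `a_i > a_{i+1}`. -/
def desSet {n : ℕ} (σ : Equiv.Perm (Fin n)) : Finset ℕ :=
  (Finset.Ico 1 n).filter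
    (fun i => ∀ h : i < n, σ ⟨i, h⟩ < σ ⟨i - 1, Nat.lt_of_le_of_lt (Nat.sub_le i 1) h⟩)

/-- Major index: sum of descent positions. -/
def majIdx {n : ℕ} (σ : Equiv.Perm (Fin n)) : ℕ := ∑ i ∈ desSet σ, i

/-- Number of descents. -/
def desNum {n : ℕ} (σ : Equiv.Perm (Fin n)) : ℕ := (desSet σ).card

/-- Number of inversions. -/
def invNum {n : ℕ} (σ : Equiv.Perm (Fin n)) : ℕ :=
  ((Finset.univ : Finset (Fin n × Fin n)).filter (fun p => p.1 < p.2 ∧ σ p.2 < σ p.1)).card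

/-- Parity lemma: a fixed-point-free involution on a finset makes its card even. -/
lemma even_card_of_invol {α : Type*} [DecidableEq α] (s : Finset α) (f : α → α)
    (hmem : ∀ x ∈ s, f x ∈ s) (hinv : ∀ x ∈ s, f (f x) = x)
    (hne : ∀ x ∈ s, f x ≠ x) : Even s.card := by
  induction s using Finset.strongInduction with
  | _ s ih =>
    rcases s.eq_empty_or_nonempty with rfl | ⟨x, hx⟩
    · simp
    · have hfx := hmem x hx
      have hxne := hne x hx
      set t := s \ {x, f x} with ht
      have htsub : t ⊂ s := by
        refine Finset.ssubset_iff_of_subset (Finset.sdiff_subset) |>.mpr ⟨x, hx, by simp [ht]⟩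
      have hmt : ∀ y ∈ t, f y ∈ t := by
        intro y hy
        simp only [ht, Finset.mem_sdiff, Finset.mem_insert, Finset.mem_singleton] at hy ⊢
        obtain ⟨hys, hy2⟩ := hy
        push_neg at hy2
        refine ⟨hmem y hys, ?_⟩
        rintro (h | h)
        · exact hy2.2 (by rw [← hinv y hys, h])
        · exact hy2.1 (by have := hinv x hx; rw [← this, ← h, hinv y hys])
      have hsub2 : ({x, f x} : Finset α) ⊆ s := by
        intro y hy; simp only [Finset.mem_insert, Finset.mem_singleton] at hy
        rcases hy with rfl | rfl; exact hx; exact hfx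
      have hcard2 : ({x, f x} : Finset α).card = 2 := by
        rw [Finset.card_insert_of_notMem (by simpa using fun h => hxne h.symm)]; rfl
      have hcard : s.card = t.card + 2 := by
        rw [ht, Finset.card_sdiff_of_subset hsub2, hcard2]
        have := Finset.card_le_card hsub2
        omega
      have := ih t htsub hmt (fun y hy => hinv y (Finset.mem_sdiff.mp hy).1)
        (fun y hy => hne y (Finset.mem_sdiff.mp hy).1)
      rcases this with ⟨c, hc⟩
      exact ⟨c + 1, by omega⟩

def noDT {n : ℕ} (σ : Equiv.Perm (Fin n)) : Prop :=
  ∀ i j k : Fin n, i < j → j < k → σ j < σ i → σ k < σ j → False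

lemma avoids_iff_noDT {n : ℕ} (σ : Equiv.Perm (Fin n)) :
    permAvoids σ p321 ↔ noDT σ := by
  constructor
  · intro hav i j k hij hjk h1 h2
    apply hav
    set f : Fin 3 → Fin n := fun a => if a.val = 0 then i else if a.val = 1 then j else k with hf
    have e0 : ∀ (h : (0:ℕ) < 3), f ⟨0, h⟩ = i := fun _ => rfl
    have e1 : ∀ (h : (1:ℕ) < 3), f ⟨1, h⟩ = j := fun _ => rfl
    have e2 : ∀ (h : (2:ℕ) < 3), f ⟨2, h⟩ = k := fun _ => rfl
    have q0 : ∀ (h : (0:ℕ) < 3), (p321 ⟨0, h⟩ : Fin 3).val = 2 := fun _ => rfl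
    have q1 : ∀ (h : (1:ℕ) < 3), (p321 ⟨1, h⟩ : Fin 3).val = 1 := fun _ => rfl
    have q2 : ∀ (h : (2:ℕ) < 3), (p321 ⟨2, h⟩ : Fin 3).val = 0 := fun _ => rfl
    have h3 : σ k < σ i := h2.trans h1
    have v1 : (σ j).val < (σ i).val := h1
    have v2 : (σ k).val < (σ j).val := h2
    have v3 : (σ k).val < (σ i).val := h3
    have vij : i.val < j.val := hij
    have vjk : j.val < k.val := hjk
    refine ⟨f, ?_, ?_⟩
    · rintro ⟨av, ha⟩ ⟨bv, hb⟩ hab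
      simp only [Fin.mk_lt_mk] at hab
      interval_cases av <;> interval_cases bv <;>
        simp only [e0, e1, e2] <;>
        first
          | omega
          | exact hij
          | exact hjk
          | exact hij.trans hjk
    · rintro ⟨av, ha⟩ ⟨bv, hb⟩
      rw [Fin.lt_def, Fin.lt_def]
      interval_cases av <;> interval_cases bv <;>
        simp only [e0, e1, e2, q0, q1, q2] <;> omega
  · rintro hn ⟨f, hf, h⟩
    have h01 : σ (f 1) < σ (f 0) := by
      rw [← h]; decide
    have h12 : σ (f 2) < σ (f 1) := by
      rw [← h]; decide
    exact hn (f 0) (f 1) (f 2) (hf (by decide)) (hf (by decide)) h01 h12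

def conjRC {n : ℕ} (σ : Equiv.Perm (Fin n)) : Equiv.Perm (Fin n) :=
  (Fin.revPerm : Equiv.Perm (Fin n)) * σ * Fin.revPerm

lemma conjRC_apply {n : ℕ} (σ : Equiv.Perm (Fin n)) (x : Fin n) :
    conjRC σ x = (σ x.rev).rev := rfl

lemma conjRC_conjRC {n : ℕ} (σ : Equiv.Perm (Fin n)) : conjRC (conjRC σ) = σ := by
  ext x
  simp [conjRC_apply, Fin.rev_rev]

lemma conjRC_inv {n : ℕ} (σ : Equiv.Perm (Fin n)) : (conjRC σ)⁻¹ = conjRC σ⁻¹ := by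
  apply inv_eq_of_mul_eq_one_right
  ext x
  simp [conjRC_apply, Fin.rev_rev, Equiv.Perm.mul_apply]

lemma invNum_inv {n : ℕ} (σ : Equiv.Perm (Fin n)) : invNum σ⁻¹ = invNum σ := by
  unfold invNum
  apply Finset.card_bij' (fun p _ => ((σ⁻¹ p.2 : Fin n), (σ⁻¹ p.1 : Fin n)))
    (fun p _ => ((σ p.2 : Fin n), (σ p.1 : Fin n)))
  · intro p hp
    simp only [Finset.mem_filter, Finset.mem_univ, true_and] at hp ⊢
    exact ⟨hp.2, by simpa using hp.1⟩
  · intro p hp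
    simp only [Finset.mem_filter, Finset.mem_univ, true_and] at hp ⊢
    exact ⟨hp.2, by simpa using hp.1⟩
  · intro p hp; simp
  · intro p hp; simp

lemma invNum_conjRC {n : ℕ} (σ : Equiv.Perm (Fin n)) : invNum (conjRC σ) = invNum σ := by
  unfold invNum
  apply Finset.card_bij' (fun p _ => ((p.2.rev : Fin n), (p.1.rev : Fin n)))
    (fun p _ => ((p.2.rev : Fin n), (p.1.rev : Fin n)))
  · intro p hp
    simp only [Finset.mem_filter, Finset.mem_univ, true_and] at hp ⊢
    simp only [conjRC_apply, Fin.rev_rev] at hp ⊢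
    exact ⟨by simpa [Fin.rev_lt_rev] using hp.1, by simpa [Fin.rev_lt_rev] using hp.2⟩
  · intro p hp
    simp only [Finset.mem_filter, Finset.mem_univ, true_and] at hp ⊢
    simp only [conjRC_apply, Fin.rev_rev] at hp ⊢
    constructor
    · rw [Fin.rev_lt_rev]; exact hp.1
    · rw [Fin.rev_lt_rev]; exact hp.2
  · intro p hp; simp [Fin.rev_rev]
  · intro p hp; simp [Fin.rev_rev]

lemma noDT_inv {n : ℕ} {σ : Equiv.Perm (Fin n)} (h : noDT σ) : noDT σ⁻¹ := by
  intro i j k hij hjk h1 h2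
  refine h (σ⁻¹ k) (σ⁻¹ j) (σ⁻¹ i) h2 h1 ?_ ?_ <;> simpa

lemma noDT_conjRC {n : ℕ} {σ : Equiv.Perm (Fin n)} (h : noDT σ) : noDT (conjRC σ) := by
  intro i j k hij hjk h1 h2
  simp only [conjRC_apply, Fin.rev_lt_rev] at h1 h2
  exact h k.rev j.rev i.rev (by rwa [Fin.rev_lt_rev]) (by rwa [Fin.rev_lt_rev]) h2 h1

/-- the underlying function of the doubling construction -/
def buildFun {m : ℕ} (τ : Equiv.Perm (Fin m)) (x : Fin (2*m+1)) : Fin (2*m+1) :=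
  if h : x.val < m then ⟨(τ ⟨x.val, h⟩).val, by have := (τ ⟨x.val, h⟩).isLt; omega⟩
  else if h2 : 2*m - x.val < m then
    ⟨2*m - (τ ⟨2*m - x.val, h2⟩).val, by have := (τ ⟨2*m - x.val, h2⟩).isLt; omega⟩
  else x

lemma buildFun_lower {m : ℕ} (τ : Equiv.Perm (Fin m)) (x : Fin (2*m+1)) (h : x.val < m) :
    buildFun τ x = ⟨(τ ⟨x.val, h⟩).val, by have := (τ ⟨x.val, h⟩).isLt; omega⟩ := dif_pos h

lemma buildFun_mid {m : ℕ} (τ : Equiv.Perm (Fin m)) (x : Fin (2*m+1)) (h : x.val = m) :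
    buildFun τ x = x := by
  unfold buildFun
  rw [dif_neg (by omega), dif_neg (by omega)]

lemma buildFun_upper {m : ℕ} (τ : Equiv.Perm (Fin m)) (x : Fin (2*m+1)) (h : m < x.val) :
    buildFun τ x = ⟨2*m - (τ ⟨2*m - x.val, by omega⟩).val,
      by have := (τ ⟨2*m - x.val, by omega⟩).isLt; omega⟩ := by
  unfold buildFun
  have hx := x.isLt
  rw [dif_neg (by omega), dif_pos (by omega)]

lemma buildFun_left_inv {m : ℕ} (τ ρ : Equiv.Perm (Fin m)) (hρ : ∀ y, ρ (τ y) = y)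
    (x : Fin (2*m+1)) : buildFun ρ (buildFun τ x) = x := by
  have hx := x.isLt
  rcases lt_trichotomy x.val m with h | h | h
  · rw [buildFun_lower τ x h]
    have hv := (τ ⟨x.val, h⟩).isLt
    rw [buildFun_lower ρ _ hv]
    apply Fin.ext
    simp only []
    have := hρ ⟨x.val, h⟩
    calc (ρ ⟨(τ ⟨x.val, h⟩).val, hv⟩).val = (ρ (τ ⟨x.val, h⟩)).val := by congr 1
      _ = x.val := by rw [this]
  · rw [buildFun_mid τ x h, buildFun_mid ρ x h]
  · rw [buildFun_upper τ x h]
    have hv := (τ ⟨2*m - x.val, by omega⟩).isLt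
    rw [buildFun_upper ρ _ (by simp only []; omega)]
    apply Fin.ext
    simp only []
    have harg : (⟨2*m - (2*m - (τ ⟨2*m - x.val, by omega⟩).val), by omega⟩ : Fin m)
        = τ ⟨2*m - x.val, by omega⟩ := by
      apply Fin.ext; simp only []; omega
    rw [harg, hρ]
    simp only []
    omega

/-- doubling construction: τ acting on the lower half, the reverse-complement copy on
the upper half, fixing the midpoint. -/
def build {m : ℕ} (τ : Equiv.Perm (Fin m)) : Equiv.Perm (Fin (2*m+1)) :=
  ⟨buildFun τ, buildFun τ⁻¹,
    buildFun_left_inv τ τ⁻¹ (fun y => Equiv.symm_apply_apply τ y),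
    buildFun_left_inv τ⁻¹ τ (fun y => Equiv.apply_symm_apply τ y)⟩

lemma build_apply {m : ℕ} (τ : Equiv.Perm (Fin m)) (x : Fin (2*m+1)) :
    build τ x = buildFun τ x := rfl

lemma build_inv_apply {m : ℕ} (τ : Equiv.Perm (Fin m)) (x : Fin (2*m+1)) :
    (build τ)⁻¹ x = buildFun τ⁻¹ x := by
  rw [Equiv.Perm.inv_def]
  rfl

lemma build_inv {m : ℕ} (τ : Equiv.Perm (Fin m)) (hτ : τ⁻¹ = τ) : (build τ)⁻¹ = build τ := by
  ext x
  rw [build_inv_apply, build_apply, hτ]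

lemma build_injective {m : ℕ} : Function.Injective (build (m := m)) := by
  intro τ ρ h
  ext y
  have hy := y.isLt
  have h2 : buildFun τ ⟨y.val, by omega⟩ = buildFun ρ ⟨y.val, by omega⟩ := by
    rw [← build_apply, ← build_apply, h]
  rw [buildFun_lower τ _ hy, buildFun_lower ρ _ hy] at h2
  have h3 := congrArg Fin.val h2
  simp only [Fin.eta] at h3
  exact h3

lemma buildFun_lower' {m : ℕ} (τ : Equiv.Perm (Fin m)) (x : Fin (2*m+1)) (h : x.val < m)
    (b : ℕ) (hb : b < m) (hbx : b = x.val) :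
    (buildFun τ x).val = (τ ⟨b, hb⟩).val := by
  subst hbx
  rw [buildFun_lower τ x h]

lemma buildFun_upper' {m : ℕ} (τ : Equiv.Perm (Fin m)) (x : Fin (2*m+1)) (h : m < x.val)
    (b : ℕ) (hb : b < m) (hbx : b = 2*m - x.val) :
    (buildFun τ x).val = 2*m - (τ ⟨b, hb⟩).val := by
  subst hbx
  rw [buildFun_upper τ x h]

lemma conjRC_build {m : ℕ} (τ : Equiv.Perm (Fin m)) : conjRC (build τ) = build τ := by
  ext x
  rw [conjRC_apply, build_apply, build_apply]
  have hx := x.isLt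
  have hrev : x.rev.val = 2*m - x.val := by rw [Fin.val_rev]; omega
  rw [Fin.val_rev]
  rcases lt_trichotomy x.val m with h | h | h
  · rw [buildFun_upper' τ x.rev (by omega) x.val h (by omega),
      buildFun_lower' τ x h x.val h rfl]
    have := (τ ⟨x.val, h⟩).isLt
    omega
  · rw [buildFun_mid τ x.rev (by omega), buildFun_mid τ x h, hrev]
    omega
  · rw [buildFun_lower' τ x.rev (by omega) (2*m - x.val) (by omega) (by omega),
      buildFun_upper' τ x (by omega) (2*m - x.val) (by omega) rfl]
    have := (τ ⟨2*m - x.val, by omega⟩).isLt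
    omega

lemma buildFun_lt_m {m : ℕ} (τ : Equiv.Perm (Fin m)) (x : Fin (2*m+1)) (h : x.val < m) :
    (buildFun τ x).val < m := by
  rw [buildFun_lower' τ x h x.val h rfl]
  exact (τ ⟨x.val, h⟩).isLt

lemma buildFun_gt_m {m : ℕ} (τ : Equiv.Perm (Fin m)) (x : Fin (2*m+1)) (h : m < x.val) :
    m < (buildFun τ x).val := by
  rw [buildFun_upper' τ x h (2*m - x.val) (by omega) rfl]
  have := (τ ⟨2*m - x.val, by omega⟩).isLt
  omega

lemma noDT_build {m : ℕ} {τ : Equiv.Perm (Fin m)} (hτ : noDT τ) : noDT (build τ) := by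
  intro i j k hij hjk h1 h2
  rw [Fin.lt_def] at hij hjk
  rw [Fin.lt_def, build_apply, build_apply] at h1 h2
  rcases lt_trichotomy k.val m with hk | hk | hk
  · -- all three lower
    have hjm : j.val < m := by omega
    have him : i.val < m := by omega
    refine hτ ⟨i.val, him⟩ ⟨j.val, hjm⟩ ⟨k.val, hk⟩ hij hjk ?_ ?_
    · rw [Fin.lt_def, ← buildFun_lower' τ j hjm j.val hjm rfl,
        ← buildFun_lower' τ i him i.val him rfl]
      exact h1
    · rw [Fin.lt_def, ← buildFun_lower' τ k hk k.val hk rfl,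
        ← buildFun_lower' τ j hjm j.val hjm rfl]
      exact h2
  · -- k is the midpoint
    have hjm : j.val < m := by omega
    rw [buildFun_mid τ k hk] at h2
    have := buildFun_lt_m τ j hjm
    omega
  · -- k upper
    rcases lt_trichotomy i.val m with hi | hi | hi
    · -- i lower, k upper: impossible
      have hik := buildFun_lt_m τ i hi
      have hkk := buildFun_gt_m τ k hk
      omega
    · rw [buildFun_mid τ i hi] at h1
      have : m < j.val := by omega
      have := buildFun_gt_m τ j this
      omega
    · -- all upper
      have hjm : m < j.val := by omega
      have hkm := k.isLt
      refine hτ ⟨2*m - k.val, by omega⟩ ⟨2*m - j.val, by omega⟩ ⟨2*m - i.val, by omega⟩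
        (by simp only [Fin.mk_lt_mk]; omega) (by simp only [Fin.mk_lt_mk]; omega) ?_ ?_
      · rw [Fin.lt_def]
        rw [buildFun_upper' τ k hk (2*m - k.val) (by omega) rfl,
          buildFun_upper' τ j hjm (2*m - j.val) (by omega) rfl] at h2
        have := (τ ⟨2*m - k.val, by omega⟩).isLt
        have := (τ ⟨2*m - j.val, by omega⟩).isLt
        omega
      · rw [Fin.lt_def]
        rw [buildFun_upper' τ j hjm (2*m - j.val) (by omega) rfl,
          buildFun_upper' τ i hi (2*m - i.val) (by omega) rfl] at h1
        have := (τ ⟨2*m - j.val, by omega⟩).isLt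
        have := (τ ⟨2*m - i.val, by omega⟩).isLt
        omega

lemma noDT_unbuild {m : ℕ} {τ : Equiv.Perm (Fin m)} (hτ : noDT (build τ)) : noDT τ := by
  intro i j k hij hjk h1 h2
  have him := i.isLt
  have hjm := j.isLt
  have hkm := k.isLt
  rw [Fin.lt_def] at hij hjk h1 h2
  refine hτ ⟨i.val, by omega⟩ ⟨j.val, by omega⟩ ⟨k.val, by omega⟩
    (by simp only [Fin.mk_lt_mk]; omega) (by simp only [Fin.mk_lt_mk]; omega) ?_ ?_
  · rw [Fin.lt_def, build_apply, build_apply,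
      buildFun_lower' τ _ hjm j.val hjm rfl, buildFun_lower' τ _ him i.val him rfl]
    rwa [Fin.eta, Fin.eta]
  · rw [Fin.lt_def, build_apply, build_apply,
      buildFun_lower' τ _ hkm k.val hkm rfl, buildFun_lower' τ _ hjm j.val hjm rfl]
    rwa [Fin.eta, Fin.eta]

lemma invNum_build {m : ℕ} (τ : Equiv.Perm (Fin m)) : invNum (build τ) = 2 * invNum τ := by
  classical
  set S : Finset (Fin (2*m+1) × Fin (2*m+1)) :=
    Finset.univ.filter (fun p => p.1 < p.2 ∧ build τ p.2 < build τ p.1) with hSdef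
  have hS : invNum (build τ) = S.card := rfl
  have hsplit : (S.filter (fun p => p.2.val < m)).card
      + (S.filter (fun p => ¬ p.2.val < m)).card = S.card :=
    Finset.card_filter_add_card_filter_not (p := fun p : Fin (2*m+1) × Fin (2*m+1) => p.2.val < m)
  have hL : invNum τ = (S.filter (fun p => p.2.val < m)).card := by
    apply Finset.card_bij
      (i := fun q (_ : q ∈ Finset.univ.filter (fun q : Fin m × Fin m => q.1 < q.2 ∧ τ q.2 < τ q.1)) =>
        ((⟨q.1.val, by have := q.1.isLt; omega⟩ : Fin (2*m+1)),
         (⟨q.2.val, by have := q.2.isLt; omega⟩ : Fin (2*m+1))))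
    · intro q hq
      simp only [hSdef, Finset.mem_filter, Finset.mem_univ, true_and] at hq ⊢
      obtain ⟨hq1, hq2⟩ := hq
      have h1m := q.1.isLt
      have h2m := q.2.isLt
      refine ⟨⟨?_, ?_⟩, ?_⟩
      · simp only [Fin.mk_lt_mk]; exact hq1
      · rw [Fin.lt_def, build_apply, build_apply,
          buildFun_lower' τ _ (by exact h2m) q.2.val h2m rfl,
          buildFun_lower' τ _ (by exact h1m) q.1.val h1m rfl]
        simpa [Fin.eta] using hq2
      · exact h2m
    · intro q1 h1 q2 h2 heq
      simp only [Prod.mk.injEq, Fin.mk.injEq] at heq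
      exact Prod.ext (Fin.ext heq.1) (Fin.ext heq.2)
    · intro p hp
      simp only [hSdef, Finset.mem_filter, Finset.mem_univ, true_and] at hp
      obtain ⟨⟨hplt, hpinv⟩, hp2m⟩ := hp
      have hp1m : p.1.val < m := lt_trans (Fin.lt_def.mp hplt) hp2m
      refine ⟨(⟨p.1.val, hp1m⟩, ⟨p.2.val, hp2m⟩), ?_, ?_⟩
      · simp only [Finset.mem_filter, Finset.mem_univ, true_and]
        constructor
        · simp only [Fin.mk_lt_mk]; exact hplt
        · rw [Fin.lt_def, build_apply, build_apply,
            buildFun_lower' τ _ hp2m p.2.val hp2m rfl,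
            buildFun_lower' τ _ hp1m p.1.val hp1m rfl] at hpinv
          rw [Fin.lt_def]
          convert hpinv using 2 <;> exact (Fin.eta _ _).symm
      · exact Prod.ext (Fin.ext rfl) (Fin.ext rfl)
  have hU : invNum τ = (S.filter (fun p => ¬ p.2.val < m)).card := by
    apply Finset.card_bij
      (i := fun q (_ : q ∈ Finset.univ.filter (fun q : Fin m × Fin m => q.1 < q.2 ∧ τ q.2 < τ q.1)) =>
        ((⟨2*m - q.2.val, by have := q.2.isLt; omega⟩ : Fin (2*m+1)),
         (⟨2*m - q.1.val, by have := q.1.isLt; omega⟩ : Fin (2*m+1))))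
    · intro q hq
      simp only [hSdef, Finset.mem_filter, Finset.mem_univ, true_and] at hq ⊢
      obtain ⟨hq1, hq2⟩ := hq
      have h1m := q.1.isLt
      have h2m := q.2.isLt
      have hq1v : q.1.val < q.2.val := hq1
      refine ⟨⟨?_, ?_⟩, by omega⟩
      · simp only [Fin.mk_lt_mk]; omega
      · rw [Fin.lt_def, build_apply, build_apply,
          buildFun_upper' τ _ (by simp only []; omega) q.1.val h1m (by simp only []; omega),
          buildFun_upper' τ _ (by simp only []; omega) q.2.val h2m (by simp only []; omega)]
        have e1 : (τ ⟨q.1.val, h1m⟩).val = (τ q.1).val := by rw [Fin.eta]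
        have e2 : (τ ⟨q.2.val, h2m⟩).val = (τ q.2).val := by rw [Fin.eta]
        have hv : (τ q.2).val < (τ q.1).val := hq2
        have b1 := (τ q.1).isLt
        have b2 := (τ q.2).isLt
        omega
    · intro q1 h1 q2 h2 heq
      have a1 := q1.1.isLt
      have a2 := q1.2.isLt
      have a3 := q2.1.isLt
      have a4 := q2.2.isLt
      simp only [Prod.mk.injEq, Fin.mk.injEq] at heq
      refine Prod.ext (Fin.ext ?_) (Fin.ext ?_) <;> omega
    · intro p hp
      simp only [hSdef, Finset.mem_filter, Finset.mem_univ, true_and] at hp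
      obtain ⟨⟨hplt, hpinv⟩, hp2m⟩ := hp
      have hp2n := p.2.isLt
      have hp1n := p.1.isLt
      have hpltv : p.1.val < p.2.val := hplt
      -- p.2 is strictly above the midpoint
      have hp2gt : m < p.2.val := by
        rcases Nat.lt_or_ge m p.2.val with h | h
        · exact h
        · exfalso
          have hp2eq : p.2.val = m := by omega
          rw [Fin.lt_def, build_apply, build_apply, buildFun_mid τ p.2 hp2eq] at hpinv
          have hp1m : p.1.val < m := by omega
          have := buildFun_lt_m τ p.1 hp1m
          omega
      have hp1gt : m < p.1.val := by
        rcases Nat.lt_trichotomy p.1.val m with h | h | h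
        · exfalso
          have := buildFun_lt_m τ p.1 h
          have := buildFun_gt_m τ p.2 hp2gt
          rw [Fin.lt_def, build_apply, build_apply] at hpinv
          omega
        · exfalso
          rw [Fin.lt_def, build_apply, build_apply, buildFun_mid τ p.1 h] at hpinv
          have := buildFun_gt_m τ p.2 hp2gt
          omega
        · exact h
      refine ⟨(⟨2*m - p.2.val, by omega⟩, ⟨2*m - p.1.val, by omega⟩), ?_, ?_⟩
      · simp only [Finset.mem_filter, Finset.mem_univ, true_and]
        constructor
        · simp only [Fin.mk_lt_mk]; omega
        · rw [Fin.lt_def, build_apply, build_apply,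
            buildFun_upper' τ _ hp2gt (2*m - p.2.val) (by omega) rfl,
            buildFun_upper' τ _ hp1gt (2*m - p.1.val) (by omega) rfl] at hpinv
          rw [Fin.lt_def]
          have b1 := (τ ⟨2*m - p.2.val, by omega⟩).isLt
          have b2 := (τ ⟨2*m - p.1.val, by omega⟩).isLt
          omega
      · refine Prod.ext (Fin.ext ?_) (Fin.ext ?_) <;> simp only [] <;> omega
  omega

lemma build_inv_comm {m : ℕ} (τ : Equiv.Perm (Fin m)) : build τ⁻¹ = (build τ)⁻¹ :=
  Equiv.ext fun _ => rfl

lemma exists_tau {m : ℕ} (σ : Equiv.Perm (Fin (2*m+1)))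
    (hinv : σ⁻¹ = σ) (hc : conjRC σ = σ) (hn : noDT σ) :
    ∃ τ : Equiv.Perm (Fin m), build τ = σ := by
  have hss : ∀ x, σ (σ x) = x := by
    intro x
    nth_rewrite 2 [← hinv]
    exact Equiv.apply_symm_apply σ x
  have sc : ∀ a b : Fin (2*m+1), a.val = b.val → (σ a).val = (σ b).val :=
    fun a b h => by rw [Fin.ext h]
  -- the midpoint is fixed
  have hmid : ∀ x : Fin (2*m+1), x.val = m → (σ x).val = m := by
    intro x hx
    have := congrArg (fun ρ : Equiv.Perm (Fin (2*m+1)) => (ρ x).val) hc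
    simp only [conjRC_apply] at this
    have hxrev : x.rev = x := Fin.ext (by rw [Fin.val_rev]; omega)
    rw [hxrev, Fin.val_rev] at this
    have := (σ x).isLt
    omega
  -- lower half goes to lower half
  have hlow : ∀ x : Fin (2*m+1), x.val < m → (σ x).val < m := by
    intro x hx
    by_contra hge
    push_neg at hge
    have hne : (σ x).val ≠ m := by
      intro he
      have h1 : σ (σ x) = σ ⟨m, by omega⟩ := congrArg σ (Fin.ext he)
      have h2 := hmid ⟨m, by omega⟩ rfl
      rw [hss] at h1
      have := congrArg Fin.val h1
      omega
    have hgt : m < (σ x).val := by omega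
    -- decreasing triple x < mid < σ x
    have hmm := hmid ⟨m, by omega⟩ rfl
    refine hn x ⟨m, by omega⟩ (σ x) ?_ ?_ ?_ ?_
    · rw [Fin.lt_def]; exact hx
    · rw [Fin.lt_def]; exact hgt
    · rw [Fin.lt_def, hmm]; exact hgt
    · rw [Fin.lt_def, hss, hmm]; exact hx
  refine ⟨⟨fun x => ⟨(σ ⟨x.val, by omega⟩).val, hlow _ x.isLt⟩,
          fun x => ⟨(σ ⟨x.val, by omega⟩).val, hlow _ x.isLt⟩, ?_, ?_⟩, ?_⟩
  · intro x
    apply Fin.ext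
    simp only []
    rw [sc _ (σ ⟨x.val, by omega⟩) rfl, hss]
  · intro x
    apply Fin.ext
    simp only []
    rw [sc _ (σ ⟨x.val, by omega⟩) rfl, hss]
  · ext x
    rw [build_apply]
    have hx := x.isLt
    rcases lt_trichotomy x.val m with h | h | h
    · rw [buildFun_lower' _ x h x.val h rfl]
      exact (sc ⟨x.val, by omega⟩ x rfl)
    · rw [buildFun_mid _ x h]
      exact (h.trans (hmid x h).symm)
    · rw [buildFun_upper' _ x h (2*m - x.val) (by omega) rfl]
      have harg : x.rev = (⟨2*m - x.val, by omega⟩ : Fin (2*m+1)) := by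
        apply Fin.ext
        rw [Fin.val_rev]
        show 2*m+1 - (x.val+1) = 2*m - x.val
        omega
      have hcx := congrArg (fun ρ : Equiv.Perm (Fin (2*m+1)) => (ρ x).val) hc
      simp only [conjRC_apply, Fin.val_rev] at hcx
      rw [harg] at hcx
      show 2*m - (σ (⟨2*m - x.val, by omega⟩ : Fin (2*m+1))).val = (σ x).val
      have hlt := (σ (⟨2*m - x.val, by omega⟩ : Fin (2*m+1))).isLt
      omega

lemma card_F_eq (m j : ℕ) :
    (Finset.univ.filter (fun σ : Equiv.Perm (Fin (2*m+1)) =>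
      (σ⁻¹ = σ ∧ noDT σ ∧ invNum σ = 2*j) ∧ conjRC σ = σ)).card
    = (Finset.univ.filter (fun τ : Equiv.Perm (Fin m) =>
      τ⁻¹ = τ ∧ noDT τ ∧ invNum τ = j)).card := by
  symm
  apply Finset.card_bij (i := fun τ (_ : τ ∈ Finset.univ.filter (fun τ : Equiv.Perm (Fin m) =>
      τ⁻¹ = τ ∧ noDT τ ∧ invNum τ = j)) => build τ)
  · intro τ hτ
    simp only [Finset.mem_filter, Finset.mem_univ, true_and] at hτ ⊢
    obtain ⟨h1, h2, h3⟩ := hτ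
    exact ⟨⟨build_inv τ h1, noDT_build h2, by rw [invNum_build, h3]⟩, conjRC_build τ⟩
  · intro τ1 h1 τ2 h2 heq
    exact build_injective heq
  · intro σ hσ
    simp only [Finset.mem_filter, Finset.mem_univ, true_and] at hσ
    obtain ⟨⟨h1, h2, h3⟩, h4⟩ := hσ
    obtain ⟨τ, hτ⟩ := exists_tau σ h1 h4 h2
    have hτinv : τ⁻¹ = τ := by
      apply build_injective
      rw [build_inv_comm, hτ, h1]
    have hτn : noDT τ := noDT_unbuild (by rw [hτ]; exact h2)
    have hτi : invNum τ = j := by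
      have := invNum_build τ
      rw [hτ, h3] at this
      omega
    refine ⟨τ, ?_, hτ⟩
    simp only [Finset.mem_filter, Finset.mem_univ, true_and]
    exact ⟨hτinv, hτn, hτi⟩

lemma F_odd_empty (m i : ℕ) (hodd : ¬ 2 ∣ i) :
    (Finset.univ.filter (fun σ : Equiv.Perm (Fin (2*m+1)) =>
      (σ⁻¹ = σ ∧ noDT σ ∧ invNum σ = i) ∧ conjRC σ = σ)) = ∅ := by
  rw [Finset.eq_empty_iff_forall_notMem]
  intro σ hσ
  simp only [Finset.mem_filter, Finset.mem_univ, true_and] at hσ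
  obtain ⟨⟨h1, h2, h3⟩, h4⟩ := hσ
  obtain ⟨τ, hτ⟩ := exists_tau σ h1 h4 h2
  rw [← hτ, invNum_build] at h3
  exact hodd ⟨invNum τ, by omega⟩

lemma even_iff_filter_fix {α : Type*} [DecidableEq α] (s : Finset α) (f : α → α)
    (hmem : ∀ x ∈ s, f x ∈ s) (hinv : ∀ x ∈ s, f (f x) = x) :
    (Even s.card ↔ Even ((s.filter (fun x => f x = x)).card)) := by
  have hsplit : (s.filter (fun x => f x = x)).card + (s.filter (fun x => ¬ f x = x)).card
      = s.card := Finset.card_filter_add_card_filter_not (fun x => f x = x)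
  have heven : Even ((s.filter (fun x => ¬ f x = x)).card) := by
    apply even_card_of_invol _ f
    · intro x hx
      rw [Finset.mem_filter] at hx ⊢
      exact ⟨hmem x hx.1, by rw [hinv x hx.1]; exact fun h => hx.2 h.symm⟩
    · intro x hx
      rw [Finset.mem_filter] at hx
      exact hinv x hx.1
    · intro x hx
      rw [Finset.mem_filter] at hx
      exact hx.2
  obtain ⟨c, hc⟩ := heven
  constructor
  · rintro ⟨d, hd⟩; exact ⟨d - c, by omega⟩
  · rintro ⟨d, hd⟩; exact ⟨d + c, by omega⟩

lemma invNum_one {n : ℕ} : invNum (1 : Equiv.Perm (Fin n)) = 0 := by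
  unfold invNum
  rw [Finset.card_eq_zero, Finset.filter_eq_empty_iff]
  rintro p _ ⟨h1, h2⟩
  simp only [Equiv.Perm.one_apply] at h2
  exact absurd h2 (asymm h1)

lemma eq_one_of_invNum_zero {n : ℕ} (σ : Equiv.Perm (Fin n)) (h : invNum σ = 0) : σ = 1 := by
  unfold invNum at h
  rw [Finset.card_eq_zero, Finset.filter_eq_empty_iff] at h
  have hmono : StrictMono (σ : Fin n → Fin n) := by
    intro a b hab
    have := h (Finset.mem_univ (a, b))
    simp only [not_and] at this
    have hne : σ a ≠ σ b := fun he => absurd (σ.injective he) (ne_of_lt hab)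
    rcases lt_or_gt_of_ne hne with hlt | hgt
    · exact hlt
    · exact absurd hgt (this hab)
  have hid : StrictMono (id : Fin n → Fin n) := strictMono_id
  have hrange : Set.range (σ : Fin n → Fin n) = Set.range (id : Fin n → Fin n) := by
    rw [σ.surjective.range_eq, Set.range_id]
  have := (hmono.range_inj hid).mp hrange
  exact Equiv.ext (fun x => congrFun this x)

lemma noDT_one {n : ℕ} : noDT (1 : Equiv.Perm (Fin n)) := by
  intro i j k hij hjk h1 h2
  simp only [Equiv.Perm.one_apply] at h1 h2
  exact absurd h1 (asymm hij)


lemma Bcard_even (k : ℕ) : ∀ i, 1 ≤ i →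
    Even ((Finset.univ.filter (fun σ : Equiv.Perm (Fin (2 ^ k - 1)) =>
      σ⁻¹ = σ ∧ noDT σ ∧ invNum σ = i)).card) := by
  induction k with
  | zero =>
    intro i hi
    rw [show (2:ℕ)^0 - 1 = 0 from rfl]
    suffices hc : (Finset.univ.filter (fun σ : Equiv.Perm (Fin 0) =>
        σ⁻¹ = σ ∧ noDT σ ∧ invNum σ = i)).card = 0 by rw [hc]; exact Even.zero
    rw [Finset.card_eq_zero, Finset.filter_eq_empty_iff]
    rintro σ _ ⟨_, _, hinv⟩
    have : invNum σ = 0 := by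
      unfold invNum
      rw [Finset.card_eq_zero, Finset.filter_eq_empty_iff]
      rintro ⟨p1, p2⟩ _
      exact absurd p1.isLt (by omega)
    omega
  | succ k ih =>
    intro i hi
    have h2p : 1 ≤ (2:ℕ)^k := Nat.one_le_two_pow
    have hps : (2:ℕ)^(k+1) = 2^k * 2 := pow_succ 2 k
    rw [show (2:ℕ)^(k+1) - 1 = 2*(2^k - 1) + 1 by omega]
    set m := (2:ℕ)^k - 1 with hm
    set s := Finset.univ.filter (fun σ : Equiv.Perm (Fin (2*m+1)) =>
      σ⁻¹ = σ ∧ noDT σ ∧ invNum σ = i) with hs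
    have htrans : Even s.card ↔ Even ((s.filter (fun σ => conjRC σ = σ)).card) := by
      apply even_iff_filter_fix s conjRC
      · intro σ hσ
        simp only [hs, Finset.mem_filter, Finset.mem_univ, true_and] at hσ ⊢
        obtain ⟨h1, h2, h3⟩ := hσ
        refine ⟨?_, noDT_conjRC h2, by rw [invNum_conjRC]; exact h3⟩
        rw [conjRC_inv, h1]
      · intro σ _
        exact conjRC_conjRC σ
    rw [htrans, hs, Finset.filter_filter]
    by_cases hdvd : 2 ∣ i
    · obtain ⟨j, rfl⟩ := hdvd
      rw [card_F_eq m j]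
      exact ih j (by omega)
    · rw [F_odd_empty m i hdvd]
      simp

theorem I321_parity (k i : ℕ) (hi : 1 ≤ i) :
    Even ((Finset.univ.filter
      (fun σ : Equiv.Perm (Fin (2 ^ k - 1)) => permAvoids σ p321 ∧ invNum σ = i)).card) ∧
    (Finset.univ.filter
      (fun σ : Equiv.Perm (Fin (2 ^ k - 1)) => permAvoids σ p321 ∧ invNum σ = 0)).card = 1 := by
  constructor
  · set s := Finset.univ.filter
      (fun σ : Equiv.Perm (Fin (2 ^ k - 1)) => permAvoids σ p321 ∧ invNum σ = i) with hs
    have htrans : Even s.card ↔ Even ((s.filter (fun σ => σ⁻¹ = σ)).card) := by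
      apply even_iff_filter_fix s (fun σ => σ⁻¹)
      · intro σ hσ
        simp only [hs, Finset.mem_filter, Finset.mem_univ, true_and] at hσ ⊢
        obtain ⟨h1, h2⟩ := hσ
        refine ⟨?_, by rw [invNum_inv]; exact h2⟩
        rw [avoids_iff_noDT] at h1 ⊢
        exact noDT_inv h1
      · intro σ _
        exact inv_inv σ
    rw [htrans, hs, Finset.filter_filter]
    have hcongr : (Finset.univ.filter
        (fun σ : Equiv.Perm (Fin (2 ^ k - 1)) => (permAvoids σ p321 ∧ invNum σ = i) ∧ σ⁻¹ = σ))
        = (Finset.univ.filter (fun σ : Equiv.Perm (Fin (2 ^ k - 1)) =>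
          σ⁻¹ = σ ∧ noDT σ ∧ invNum σ = i)) := by
      apply Finset.filter_congr
      intro σ _
      rw [avoids_iff_noDT]
      constructor
      · rintro ⟨⟨h1, h2⟩, h3⟩; exact ⟨h3, h1, h2⟩
      · rintro ⟨h1, h2, h3⟩; exact ⟨⟨h2, h3⟩, h1⟩
    rw [hcongr]
    exact Bcard_even k i hi
  · rw [show (Finset.univ.filter
      (fun σ : Equiv.Perm (Fin (2 ^ k - 1)) => permAvoids σ p321 ∧ invNum σ = 0))
      = {1} from ?_, Finset.card_singleton]
    rw [Finset.eq_singleton_iff_unique_mem]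
    constructor
    · simp only [Finset.mem_filter, Finset.mem_univ, true_and]
      exact ⟨(avoids_iff_noDT 1).mpr noDT_one, invNum_one⟩
    · intro σ hσ
      simp only [Finset.mem_filter, Finset.mem_univ, true_and] at hσ
      exact eq_one_of_invNum_zero σ hσ.2
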